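/- Let T = 𝔱/Λ be a torus (𝔱 a finite-dimensional real vector space with inner product, Λ a full lattice), and σ a linear automorphism of finite order of 𝔱 preserving Λ and the inner product. Then the component group π₀(T^σ) of the fixed subgroup T^σ is naturally isomorphic to the torsion subgroup of the coinvariants Λ_σ = Λ/(Id − σ)Λ. In particular, if σ permutes a Z-basis of Λ, then T^σ is connected. -/

import Mathlib

open scoped RealInnerProductSpace

/-- The fixed-point subgroup of an additive group endomorphism. -/
def fixedAddSubgroup {T : Type*} [AddGroup T] (f : T →+ T) : AddSubgroup T where
  carrier := {t | f t = t}
  zero_mem' := by simp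
  add_mem' := by
    intro x y hx hy
    simp only [Set.mem_setOf_eq, map_add] at *
    rw [hx, hy]
  neg_mem' := by
    intro x hx
    simp only [Set.mem_setOf_eq, map_neg] at *
    rw [hx]

section Aux

variable {V : Type*} [AddCommGroup V] [Module ℝ V] (σ : V ≃ₗ[ℝ] V) (Λ : AddSubgroup V)

/-- The subgroup of `V` of points whose class in `V ⧸ Λ` is fixed by `σ`. -/
private def auxA : AddSubgroup V where
  carrier := {x | x - σ x ∈ Λ}
  zero_mem' := by
    simp only [Set.mem_setOf_eq, map_zero, sub_self]
    exact zero_mem Λ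
  add_mem' := by
    intro a b ha hb
    simp only [Set.mem_setOf_eq, map_add] at *
    have h := add_mem ha hb
    convert h using 1
    abel
  neg_mem' := by
    intro a ha
    simp only [Set.mem_setOf_eq, map_neg] at *
    have h := neg_mem ha
    convert h using 1
    abel

private lemma mem_auxA {x : V} : x ∈ auxA σ Λ ↔ x - σ x ∈ Λ := Iff.rfl

/-- `x ↦ x - σ x` as an additive homomorphism. -/
private def auxfσ : V →+ V where
  toFun x := x - σ x
  map_zero' := by simp
  map_add' a b := by
    simp only [map_add]
    abel

/-- The map `x ↦ [x - σ x] ∈ Λ ⧸ NΛ` on `auxA`. -/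
private def auxg (NΛ : AddSubgroup ↥Λ) : ↥(auxA σ Λ) →+ ↥Λ ⧸ NΛ :=
  (QuotientAddGroup.mk' NΛ).comp
    (((auxfσ σ).comp (auxA σ Λ).subtype).codRestrict Λ (fun a => a.2))

private lemma auxg_apply (NΛ : AddSubgroup ↥Λ) (a : ↥(auxA σ Λ)) :
    auxg σ Λ NΛ a = QuotientAddGroup.mk (⟨(a : V) - σ (a : V), a.2⟩ : ↥Λ) := rfl

/-- The projection from `auxA` onto the fixed subgroup of the torus. -/
private def auxπ (σT : (V ⧸ Λ) →+ (V ⧸ Λ))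
    (hσT : ∀ x : V, σT (QuotientAddGroup.mk x) = QuotientAddGroup.mk (σ x)) :
    ↥(auxA σ Λ) →+ ↥(fixedAddSubgroup σT) :=
  ((QuotientAddGroup.mk' Λ).comp (auxA σ Λ).subtype).codRestrict (fixedAddSubgroup σT)
    (fun a => by
      show σT (QuotientAddGroup.mk (a : V)) = QuotientAddGroup.mk (a : V)
      rw [hσT]
      exact QuotientAddGroup.eq.mpr (by rw [neg_add_eq_sub]; exact a.2))

private lemma auxπ_apply (σT : (V ⧸ Λ) →+ (V ⧸ Λ))
    (hσT : ∀ x : V, σT (QuotientAddGroup.mk x) = QuotientAddGroup.mk (σ x))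
    (a : ↥(auxA σ Λ)) :
    ((auxπ σ Λ σT hσT a : ↥(fixedAddSubgroup σT)) : V ⧸ Λ) = QuotientAddGroup.mk (a : V) := rfl

end Aux

/-- Let `T = 𝔱/Λ` be a torus (`Λ` a full lattice, generated by an `ℝ`-basis `bV` of `𝔱`)
and `σ` a finite-order linear automorphism of `𝔱` preserving `Λ` and the inner product,
inducing `σT` on `T`. Then the component group `π₀(T^σ)` of the fixed subgroup `T^σ`
(realized as the quotient of `T^σ` by the connected component of `0`) is naturally
isomorphic to the torsion subgroup of the coinvariants `Λ_σ = Λ/(Id − σ)Λ`. In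
particular, if `σ` permutes a `ℤ`-basis of `Λ`, then `T^σ` is connected. -/
theorem pi0_fixed_torus {V : Type*} [NormedAddCommGroup V] [InnerProductSpace ℝ V]
    [FiniteDimensional ℝ V] {ι : Type*} [Fintype ι] (bV : Module.Basis ι ℝ V)
    (Λ : AddSubgroup V) (hΛ : Λ = AddSubgroup.closure (Set.range bV))
    (σ : V ≃ₗ[ℝ] V) (hord : ∃ m : ℕ, 0 < m ∧ σ ^ m = 1)
    (hinner : ∀ x y : V, ⟪σ x, σ y⟫ = ⟪x, y⟫)
    (hσΛ : ∀ x ∈ Λ, σ x ∈ Λ)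
    (σT : (V ⧸ Λ) →+ (V ⧸ Λ))
    (hσT : ∀ x : V, σT (QuotientAddGroup.mk x) = QuotientAddGroup.mk (σ x))
    (NΛ : AddSubgroup ↥Λ)
    (hNΛ : (NΛ : Set ↥Λ) = {z : ↥Λ | ∃ x : ↥Λ, (z : V) = (x : V) - σ (x : V)}) :
    Nonempty
      ((↥(fixedAddSubgroup σT) ⧸
          AddSubgroup.connectedComponentOfZero ↥(fixedAddSubgroup σT)) ≃+
        ↥(AddCommGroup.torsion (↥Λ ⧸ NΛ))) ∧
    ((∀ i, ∃ j, σ (bV i) = bV j) →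
      IsConnected ((fixedAddSubgroup σT : Set (V ⧸ Λ)))) := by
  classical
  obtain ⟨m, hm, hσm⟩ := hord
  -- basic membership facts for Λ
  have hrange_mem : ∀ i, bV i ∈ Λ := fun i => hΛ ▸ AddSubgroup.subset_closure ⟨i, rfl⟩
  have hint : ∀ x ∈ Λ, ∀ i, ∃ n : ℤ, bV.repr x i = n := by
    intro x hx
    rw [hΛ] at hx
    induction hx using AddSubgroup.closure_induction with
    | mem x hx =>
      obtain ⟨j, rfl⟩ := hx
      intro i
      refine ⟨if j = i then 1 else 0, ?_⟩
      rw [Module.Basis.repr_self]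
      rw [Finsupp.single_apply]
      split_ifs <;> simp
    | zero => intro i; exact ⟨0, by simp⟩
    | add x y hx hy ihx ihy =>
      intro i
      obtain ⟨n, hn⟩ := ihx i
      obtain ⟨k, hk⟩ := ihy i
      exact ⟨n + k, by rw [map_add]; push_cast; simp [hn, hk]⟩
    | neg x hx ihx =>
      intro i
      obtain ⟨n, hn⟩ := ihx i
      exact ⟨-n, by rw [map_neg]; push_cast; simp [hn]⟩
  have hof : ∀ n : ι → ℤ, (∑ i, (n i : ℝ) • bV i) ∈ Λ := by
    intro n
    refine sum_mem fun i _ => ?_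
    rw [Int.cast_smul_eq_zsmul]
    exact zsmul_mem (hrange_mem i) _
  -- the quotient equality criterion
  have hmkeq : ∀ x y : V, (QuotientAddGroup.mk x : V ⧸ Λ) = QuotientAddGroup.mk y ↔
      x - y ∈ Λ := by
    intro x y
    rw [QuotientAddGroup.eq, show -x + y = -(x - y) by abel, neg_mem_iff]
  -- membership in the fixed subgroup
  have hFmem : ∀ x : V, (QuotientAddGroup.mk x ∈ fixedAddSubgroup σT) ↔ x - σ x ∈ Λ := by
    intro x
    constructor
    · intro hx
      have : σT (QuotientAddGroup.mk x) = QuotientAddGroup.mk x := hx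
      rw [hσT] at this
      have h2 := (hmkeq (σ x) x).mp this
      have h3 := neg_mem h2
      simpa [neg_sub] using h3
    · intro hx
      show σT (QuotientAddGroup.mk x) = QuotientAddGroup.mk x
      rw [hσT]
      exact (hmkeq (σ x) x).mpr (by simpa [neg_sub] using neg_mem hx)
  -- the fixed set K in V and its connectivity apparatus
  have hKconv : Convex ℝ {x : V | σ x = x} := by
    intro x hx y hy a b _ _ _
    simp only [Set.mem_setOf_eq] at *
    simp [map_add, map_smul, hx, hy]
  have hKpre : IsPreconnected {x : V | σ x = x} := hKconv.isPreconnected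
  -- the map from K to the fixed subgroup
  let θ : {x : V | σ x = x} → ↥(fixedAddSubgroup σT) := fun k =>
    ⟨QuotientAddGroup.mk (k : V), (hFmem (k : V)).mpr (by
      have : σ (k : V) = (k : V) := k.2
      rw [this, sub_self]
      exact zero_mem Λ)⟩
  have hθcont : Continuous θ :=
    Continuous.subtype_mk (QuotientAddGroup.continuous_mk.comp continuous_subtype_val) _
  haveI : PreconnectedSpace {x : V | σ x = x} := Subtype.preconnectedSpace hKpre
  have hSpre : IsPreconnected (Set.range θ) := isPreconnected_range hθcont
  have h0S : (0 : ↥(fixedAddSubgroup σT)) ∈ Set.range θ :=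
    ⟨⟨0, by simp⟩, Subtype.ext rfl⟩
  have hSsub : Set.range θ ⊆ connectedComponent (0 : ↥(fixedAddSubgroup σT)) :=
    hSpre.subset_connectedComponent h0S
  -- iterates of σ
  have hiter_sub : ∀ (i : ℕ) (x y : V), (⇑σ)^[i] (x - y) = (⇑σ)^[i] x - (⇑σ)^[i] y := by
    intro i x y
    rw [← LinearEquiv.pow_apply, ← LinearEquiv.pow_apply, ← LinearEquiv.pow_apply, map_sub]
  have hiter_m : ∀ x : V, (⇑σ)^[m] x = x := by
    intro x
    rw [← LinearEquiv.pow_apply, hσm]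
    rfl
  have hiter_mem : ∀ (j : ℕ) (x : V), x ∈ Λ → (⇑σ)^[j] x ∈ Λ := by
    intro j
    induction j with
    | zero => intro x hx; simpa using hx
    | succ j ih =>
      intro x hx
      rw [Function.iterate_succ_apply]
      exact ih _ (hσΛ x hx)
  -- NΛ membership criterion
  have hNmem : ∀ z : ↥Λ, z ∈ NΛ ↔ ∃ x : ↥Λ, (z : V) = (x : V) - σ (x : V) := by
    intro z
    rw [← SetLike.mem_coe, hNΛ]
    rfl
  constructor
  · -- the isomorphism
    let π := auxπ σ Λ σT hσT
    let g := auxg σ Λ NΛ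
    have hπsurj : Function.Surjective π := by
      rintro ⟨t, ht⟩
      obtain ⟨x, rfl⟩ := QuotientAddGroup.mk_surjective t
      exact ⟨⟨x, (hFmem x).mp ht⟩, Subtype.ext rfl⟩
    have hkerle : π.ker ≤ g.ker := by
      intro a ha
      rw [AddMonoidHom.mem_ker] at ha ⊢
      have haΛ : (a : V) ∈ Λ := by
        have : ((π a : ↥(fixedAddSubgroup σT)) : V ⧸ Λ) = 0 := by rw [ha]; rfl
        rw [auxπ_apply] at this
        exact (QuotientAddGroup.eq_zero_iff _).mp this
      rw [auxg_apply]
      rw [QuotientAddGroup.eq_zero_iff]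
      exact (hNmem _).mpr ⟨⟨(a : V), haΛ⟩, rfl⟩
    let Φ := QuotientAddGroup.quotientKerEquivOfSurjective π hπsurj
    let ΨQ := QuotientAddGroup.lift π.ker g hkerle
    let Ψ : ↥(fixedAddSubgroup σT) →+ ↥Λ ⧸ NΛ := ΨQ.comp Φ.symm.toAddMonoidHom
    have hΦmk : ∀ a : ↥(auxA σ Λ), Φ (QuotientAddGroup.mk a) = π a := fun a =>
      QuotientAddGroup.kerLift_mk π a
    have hΨπ : ∀ a : ↥(auxA σ Λ), Ψ (π a) = g a := by
      intro a
      have h1 : Φ.symm (π a) = QuotientAddGroup.mk a := by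
        apply Φ.injective
        rw [AddEquiv.apply_symm_apply, hΦmk]
      show ΨQ (Φ.symm (π a)) = g a
      rw [h1]
      exact QuotientAddGroup.lift_mk _ hkerle a
    -- kernel of Ψ is the connected component of 0
    have hker : Ψ.ker = AddSubgroup.connectedComponentOfZero ↥(fixedAddSubgroup σT) := by
      apply le_antisymm
      · intro t ht
        obtain ⟨a, rfl⟩ := hπsurj t
        rw [AddMonoidHom.mem_ker, hΨπ] at ht
        rw [auxg_apply] at ht
        have hmem : (⟨(a : V) - σ (a : V), a.2⟩ : ↥Λ) ∈ NΛ :=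
          (QuotientAddGroup.eq_zero_iff _).mp ht
        obtain ⟨l, hl⟩ := (hNmem _).mp hmem
        have hk : σ ((a : V) - (l : V)) = (a : V) - (l : V) := by
          have h2 : (a : V) - (l : V) = σ (a : V) - σ (l : V) :=
            sub_eq_sub_iff_sub_eq_sub.mp hl
          rw [map_sub, ← h2]
        refine hSsub ⟨⟨(a : V) - (l : V), hk⟩, ?_⟩
        apply Subtype.ext
        show QuotientAddGroup.mk ((a : V) - (l : V)) = ((π a : ↥(fixedAddSubgroup σT)) : V ⧸ Λ)
        rw [auxπ_apply]
        exact (hmkeq _ _).mpr (by simpa using neg_mem l.2)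
      · -- the component is contained in the kernel since the kernel is clopen
        -- discreteness of Λ
        have hcont : Continuous fun x : V => bV.equivFun x :=
          LinearMap.continuous_of_finiteDimensional (bV.equivFun : V ≃ₗ[ℝ] (ι → ℝ)).toLinearMap
        obtain ⟨δ, hδpos, hδ⟩ := Metric.continuousAt_iff.mp hcont.continuousAt (1/2) (by norm_num)
        have hdisc : ∀ x ∈ Λ, ‖x‖ < δ → x = 0 := by
          intro x hx hxδ
          have h1 : dist x 0 < δ := by rwa [dist_zero_right]
          have h2 := hδ h1
          rw [map_zero, dist_zero_right] at h2
          have h3 : ∀ i, bV.equivFun x i = 0 := by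
            intro i
            obtain ⟨n, hn⟩ := hint x hx i
            have h4 : |bV.equivFun x i| ≤ ‖bV.equivFun x‖ := by
              have := norm_le_pi_norm (bV.equivFun x) i
              rwa [Real.norm_eq_abs] at this
            have h5 : bV.equivFun x i = bV.repr x i := by rw [bV.equivFun_apply]
            rw [h5, hn] at h4 ⊢
            have : |(n : ℝ)| < 1/2 := lt_of_le_of_lt h4 h2
            have hn0 : n = 0 := by
              by_contra hne
              have := Int.one_le_abs hne
              have : (1 : ℝ) ≤ |(n : ℝ)| := by exact_mod_cast this
              linarith
            rw [hn0]; simp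
          have : bV.equivFun x = 0 := funext h3
          exact bV.equivFun.map_eq_zero_iff.mp this
        -- smallness of x - σ x near 0
        have hcont2 : Continuous fun x : V => x - σ x := by
          have hσc : Continuous σ := σ.toLinearMap.continuous_of_finiteDimensional
          exact continuous_id.sub hσc
        obtain ⟨ε, hεpos, hε⟩ :=
          Metric.continuousAt_iff.mp (hcont2.continuousAt (x := (0:V))) δ hδpos
        have hopen : IsOpen (Ψ.ker : Set ↥(fixedAddSubgroup σT)) := by
          apply AddSubgroup.isOpen_of_mem_nhds (g := (0 : ↥(fixedAddSubgroup σT)))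
          rw [mem_nhds_iff]
          refine ⟨Subtype.val ⁻¹' (QuotientAddGroup.mk '' Metric.ball (0:V) ε), ?_, ?_, ?_⟩
          · rintro t ⟨x, hxball, hxt⟩
            have hxF : x - σ x ∈ Λ := (hFmem x).mp (by rw [hxt]; exact t.2)
            have hsmall : ‖x - σ x‖ < δ := by
              have h1 : dist x 0 < ε := by rwa [Metric.mem_ball] at hxball
              have h2 := hε h1
              simp only [map_zero, sub_zero, sub_self] at h2
              rwa [dist_zero_right] at h2
            have hzero : x - σ x = 0 := hdisc _ hxF hsmall
            have hxA : x ∈ auxA σ Λ := by rw [mem_auxA, hzero]; exact zero_mem Λ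
            have htπ : t = π ⟨x, hxA⟩ := by
              apply Subtype.ext
              rw [auxπ_apply]
              exact hxt.symm
            rw [SetLike.mem_coe, AddMonoidHom.mem_ker, htπ, hΨπ, auxg_apply]
            rw [QuotientAddGroup.eq_zero_iff]
            have h0 : (⟨x - σ x, hxA⟩ : ↥Λ) = 0 := Subtype.ext hzero
            rw [h0]
            exact zero_mem NΛ
          · exact (QuotientAddGroup.isOpenMap_coe _ Metric.isOpen_ball).preimage
              continuous_subtype_val
          · exact ⟨(0:V), Metric.mem_ball_self hεpos, rfl⟩
        have hclosed := AddSubgroup.isClosed_of_isOpen _ hopen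
        intro t ht
        exact IsClopen.connectedComponent_subset ⟨hclosed, hopen⟩ (zero_mem _) ht
    -- range of Ψ is the torsion subgroup
    have hrange : Ψ.range = AddCommGroup.torsion (↥Λ ⧸ NΛ) := by
      ext z
      rw [AddMonoidHom.mem_range, AddCommGroup.mem_torsion, isOfFinAddOrder_iff_nsmul_eq_zero]
      constructor
      · rintro ⟨t, rfl⟩
        obtain ⟨a, rfl⟩ := hπsurj t
        rw [hΨπ, auxg_apply]
        refine ⟨m, hm, ?_⟩
        set μ : V := (a : V) - σ (a : V) with hμdef
        have hμΛ : μ ∈ Λ := a.2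
        -- telescoping : ∑_{i<m} σ^[i] μ = 0
        have htel : ∑ i ∈ Finset.range m, (⇑σ)^[i] μ = 0 := by
          have h1 : ∀ i, (⇑σ)^[i] μ = (⇑σ)^[i] (a : V) - (⇑σ)^[i+1] (a : V) := by
            intro i
            rw [hμdef, hiter_sub, Function.iterate_succ_apply]
          rw [Finset.sum_congr rfl fun i _ => h1 i, Finset.sum_range_sub']
          rw [Function.iterate_zero_apply, hiter_m, sub_self]
        -- the combination S with m • μ = S - σ S
        set S : V := ∑ i ∈ Finset.range m, ∑ j ∈ Finset.range i, (⇑σ)^[j] μ with hSdef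
        have hSΛ : S ∈ Λ := sum_mem fun i _ => sum_mem fun j _ => hiter_mem j μ hμΛ
        have hS : m • μ = S - σ S := by
          have hσS : σ S = ∑ i ∈ Finset.range m, ∑ j ∈ Finset.range i, (⇑σ)^[j+1] μ := by
            rw [hSdef, map_sum]
            refine Finset.sum_congr rfl fun i _ => ?_
            rw [map_sum]
            refine Finset.sum_congr rfl fun j _ => ?_
            exact (Function.iterate_succ_apply' (⇑σ) j μ).symm
          rw [hσS, hSdef, ← Finset.sum_sub_distrib]
          have h2 : ∀ i, (∑ j ∈ Finset.range i, (⇑σ)^[j] μ) -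
              (∑ j ∈ Finset.range i, (⇑σ)^[j+1] μ) = μ - (⇑σ)^[i] μ := by
            intro i
            rw [← Finset.sum_sub_distrib, Finset.sum_range_sub', Function.iterate_zero_apply]
          rw [Finset.sum_congr rfl fun i _ => h2 i, Finset.sum_sub_distrib, htel, sub_zero,
            Finset.sum_const, Finset.card_range]
        -- conclude
        rw [← QuotientAddGroup.mk_nsmul]
        rw [QuotientAddGroup.eq_zero_iff]
        refine (hNmem _).mpr ⟨⟨S, hSΛ⟩, ?_⟩
        show ((m • (⟨μ, hμΛ⟩ : ↥Λ) : ↥Λ) : V) = S - σ S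
        rw [← hS]
        rfl
      · rintro hz
        obtain ⟨w, rfl⟩ := QuotientAddGroup.mk_surjective z
        obtain ⟨n, hn, hnz⟩ := hz
        have hnw : n • w ∈ NΛ := by
          rw [← QuotientAddGroup.eq_zero_iff]
          rw [QuotientAddGroup.mk_nsmul]
          exact hnz
        obtain ⟨l, hl⟩ := (hNmem _).mp hnw
        have hlV : ((n • w : ↥Λ) : V) = (n : ℝ) • (w : V) := by
          push_cast
          rw [Nat.cast_smul_eq_nsmul]
        set x : V := (n : ℝ)⁻¹ • (l : V) with hxdef
        have hn0 : (n : ℝ) ≠ 0 := by exact_mod_cast hn.ne'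
        have hx : x - σ x = (w : V) := by
          rw [hxdef, map_smul, ← smul_sub, ← hl, hlV, smul_smul, inv_mul_cancel₀ hn0, one_smul]
        have hxA : x ∈ auxA σ Λ := by rw [mem_auxA, hx]; exact w.2
        refine ⟨π ⟨x, hxA⟩, ?_⟩
        rw [hΨπ, auxg_apply]
        exact congrArg _ (Subtype.ext hx)
    exact ⟨((QuotientAddGroup.quotientAddEquivOfEq hker.symm).trans
      (QuotientAddGroup.quotientKerEquivRange Ψ)).trans (AddEquiv.addSubgroupCongr hrange)⟩
  · -- connectedness when σ permutes the basis
    intro hperm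
    choose jmap hjmap using hperm
    have hbVinj : Function.Injective bV := Module.Basis.injective bV
    have hjinj : Function.Injective jmap := by
      intro i i' h
      apply hbVinj
      apply σ.injective
      rw [hjmap, hjmap, h]
    let e : ι ≃ ι := Equiv.ofBijective jmap (Finite.injective_iff_bijective.mp hjinj)
    have he : ∀ i, σ (bV i) = bV (e i) := hjmap
    -- σ of a coordinate expansion
    have hσsum : ∀ d : ι → ℝ, σ (∑ i, d i • bV i) = ∑ i, d (e.symm i) • bV i := by
      intro d
      rw [map_sum]
      have h1 : ∀ i, σ (d i • bV i) = d i • bV (e i) := fun i => by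
        rw [map_smul, he i]
      rw [Finset.sum_congr rfl fun i _ => h1 i]
      have h2 := Equiv.sum_comp e (fun i => d (e.symm i) • bV i)
      simp only [Equiv.symm_apply_apply] at h2
      exact h2
    -- show the fixed subgroup equals the image of K
    have hFS : (fixedAddSubgroup σT : Set (V ⧸ Λ)) =
        QuotientAddGroup.mk '' {x : V | σ x = x} := by
      ext t
      constructor
      · intro ht
        obtain ⟨x, rfl⟩ := QuotientAddGroup.mk_surjective t
        have hμΛ : x - σ x ∈ Λ := (hFmem x).mp ht
        set d : ι → ℝ := fun i => bV.repr x i with hd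
        have hxd : x = ∑ i, d i • bV i := (bV.sum_repr x).symm
        have hσx : σ x = ∑ i, d (e.symm i) • bV i := by rw [hxd, hσsum]
        have hμsum : x - σ x = ∑ i, (d i - d (e.symm i)) • bV i := by
          rw [hσx, hxd, ← Finset.sum_sub_distrib]
          exact Finset.sum_congr rfl fun i _ => (sub_smul _ _ _).symm
        -- integer coordinates of μ
        have hci : ∀ i, ∃ c : ℤ, d i - d (e.symm i) = c := by
          intro i
          obtain ⟨c, hc⟩ := hint _ hμΛ i
          refine ⟨c, ?_⟩
          have : bV.repr (x - σ x) i = d i - d (e.symm i) := by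
            rw [map_sub]
            simp only [Finsupp.sub_apply]
            rw [hσx]
            have h3 : (bV.repr (∑ i, d (e.symm i) • bV i)) i = d (e.symm i) := by
              rw [map_sum]
              simp [Module.Basis.repr_self, Finsupp.single_apply]
            rw [h3, hd]
          rw [← this, hc]
        -- floor lattice element
        set lam : V := ∑ i, ((⌊d i⌋ : ℝ)) • bV i with hlam
        have hlamΛ : lam ∈ Λ := hof fun i => ⌊d i⌋
        have hfrac : ∀ i, d i - (⌊d i⌋ : ℝ) = d (e.symm i) - (⌊d (e.symm i)⌋ : ℝ) := by
          intro i
          obtain ⟨c, hc⟩ := hci i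
          have hdi : d i = d (e.symm i) + (c : ℝ) := by linarith [hc]
          have : ⌊d i⌋ = ⌊d (e.symm i)⌋ + c := by rw [hdi, Int.floor_add_intCast]
          rw [this, hdi]
          push_cast
          ring
        have hkfix : σ (x - lam) = x - lam := by
          have hσlam : σ lam = ∑ i, ((⌊d (e.symm i)⌋ : ℝ)) • bV i := by
            rw [hlam, hσsum]
          have h4 : x - lam = ∑ i, (d i - (⌊d i⌋ : ℝ)) • bV i := by
            rw [hxd, hlam, ← Finset.sum_sub_distrib]
            exact Finset.sum_congr rfl fun i _ => (sub_smul _ _ _).symm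
          have h5 : σ x - σ lam = ∑ i, (d (e.symm i) - (⌊d (e.symm i)⌋ : ℝ)) • bV i := by
            rw [hσx, hσlam, ← Finset.sum_sub_distrib]
            exact Finset.sum_congr rfl fun i _ => (sub_smul _ _ _).symm
          rw [map_sub, h5, h4]
          exact Finset.sum_congr rfl fun i _ => by rw [hfrac i]
        refine ⟨x - lam, hkfix, ?_⟩
        exact (hmkeq _ _).mpr (by simpa using neg_mem hlamΛ)
      · rintro ⟨k, hk, rfl⟩
        exact (hFmem k).mpr (by rw [hk, sub_self]; exact zero_mem Λ)
    rw [hFS]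
    refine ⟨⟨QuotientAddGroup.mk 0, 0, by simp, rfl⟩, ?_⟩
    exact hKpre.image _ (QuotientAddGroup.continuous_mk.continuousOn)
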